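/- Let ν be an M×N real matrix of rank M (so M ≤ N) and set K = N − M. Let C be an N×K real matrix whose K columns form a basis of the kernel of the linear map x ↦ ν x. Then there exists a nonzero real constant c, depending only on ν and C (and not on R), such that for every N×M real matrix R one has det(ν ⬝ R) = c · det([R | C]), where [R | C] denotes the N×N matrix whose first M columns are those of R and whose last K columns are those of C. -/

import Mathlib

/-- The square `N × N` matrix obtained by placing the columns of an `N × M` matrix `X`
before the columns of an `N × K` matrix `Y`, given `M + K = N`. -/
noncomputable def catCols {N M K : ℕ} (h : M + K = N)
    (X : Matrix (Fin N) (Fin M) ℝ) (Y : Matrix (Fin N) (Fin K) ℝ) :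
    Matrix (Fin N) (Fin N) ℝ :=
  (Matrix.fromCols X Y).submatrix id (fun j => finSumFinEquiv.symm (Fin.cast h.symm j))


open Matrix

/-- A square real matrix of full rank has nonzero determinant. -/
lemma aux_det_ne_zero_of_rank {m : ℕ} (A : Matrix (Fin m) (Fin m) ℝ) (h : A.rank = m) :
    A.det ≠ 0 := by
  intro hdet
  obtain ⟨v, hv, hmv⟩ := (Matrix.exists_mulVec_eq_zero_iff).2 hdet
  have hrange : LinearMap.range A.mulVecLin = ⊤ := by
    apply Submodule.eq_top_of_finrank_eq
    rw [← Matrix.rank, h, Module.finrank_pi, Fintype.card_fin]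
  have hinj : Function.Injective A.mulVecLin :=
    (LinearMap.injective_iff_surjective).2 (LinearMap.range_eq_top.1 hrange)
  exact hv (hinj (by simpa [Matrix.mulVecLin_apply] using hmv))

/-- for a full-row-rank `M × N` matrix `ν` and a matrix `C` whose columns form a
basis of `ker ν`, there is a nonzero constant `c`, depending only on `ν` and `C`, with
`det (ν * R) = c * det [R | C]` for every `N × M` matrix `R`. -/
theorem statement0 {M N K : ℕ} (hK : M + K = N)
    (ν : Matrix (Fin M) (Fin N) ℝ) (hrank : ν.rank = M)
    (C : Matrix (Fin N) (Fin K) ℝ)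
    (hC : ∃ b : Module.Basis (Fin K) ℝ (LinearMap.ker ν.mulVecLin),
        ∀ k n, (b k).1 n = C n k) :
    ∃ c : ℝ, c ≠ 0 ∧ ∀ R : Matrix (Fin N) (Fin M) ℝ,
      (ν * R).det = c * (catCols hK R C).det := by
  obtain ⟨b, hb⟩ := hC
  -- ν * C = 0, since each column of C lies in the kernel of ν
  have hνC : ν * C = 0 := by
    ext i k
    have hm : ν.mulVecLin (b k).1 = 0 := LinearMap.mem_ker.1 (b k).2
    have h1 : ν.mulVec (fun n => C n k) = 0 := by
      have h2 : (fun n => C n k) = ((b k : Fin N → ℝ)) := by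
        funext n; exact (hb k n).symm
      rw [h2]
      exact hm
    have := congrFun h1 i
    simpa [Matrix.mulVec, dotProduct, Matrix.mul_apply] using this
  set E : Fin N ≃ (Fin M ⊕ Fin K) := (finCongr hK.symm).trans finSumFinEquiv.symm with hE
  have hcat : ∀ R : Matrix (Fin N) (Fin M) ℝ,
      catCols hK R C = (Matrix.fromCols R C).submatrix id ⇑E := by
    intro R; rfl
  set P : Matrix (Fin N) (Fin N) ℝ := (Matrix.fromRows ν Cᵀ).submatrix ⇑E id with hP
  -- the key determinant identity obtained by multiplying [ν; Cᵀ] with [R | C]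
  have key : ∀ R : Matrix (Fin N) (Fin M) ℝ,
      P.det * (catCols hK R C).det = (ν * R).det * (Cᵀ * C).det := by
    intro R
    have hmul : P * catCols hK R C
        = ((Matrix.fromRows ν Cᵀ) * (Matrix.fromCols R C)).submatrix ⇑E ⇑E := by
      rw [hcat, hP, ← Equiv.coe_refl,
        Matrix.submatrix_mul_equiv (Matrix.fromRows ν Cᵀ) (Matrix.fromCols R C)
          ⇑E (Equiv.refl (Fin N)) ⇑E]
    have := congrArg Matrix.det hmul
    rw [Matrix.det_mul] at this
    rw [this, Matrix.det_submatrix_equiv_self, Matrix.fromRows_mul_fromCols, hνC,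
      Matrix.det_fromBlocks_zero₁₂]
  -- C has full column rank since its columns are a basis of the kernel
  have hCinj : Function.Injective C.mulVecLin := by
    rw [← LinearMap.ker_eq_bot]
    rw [Submodule.eq_bot_iff]
    intro y hy
    rw [LinearMap.mem_ker] at hy
    have hsum : (∑ k, y k • b k) = 0 := by
      apply Subtype.ext
      funext n
      have : C.mulVec y n = 0 := congrFun (by simpa [Matrix.mulVecLin_apply] using hy) n
      simpa [Matrix.mulVec, dotProduct, hb, mul_comm] using this
    have := (Fintype.linearIndependent_iff.1 b.linearIndependent) y hsum
    funext k; exact this k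
  have hCrank : (Cᵀ * C).rank = K := by
    rw [Matrix.rank_transpose_mul_self]
    rw [Matrix.rank, LinearMap.finrank_range_of_inj hCinj, Module.finrank_pi, Fintype.card_fin]
  have hCdet : (Cᵀ * C).det ≠ 0 := aux_det_ne_zero_of_rank _ hCrank
  have hννdet : (ν * νᵀ).det ≠ 0 := by
    apply aux_det_ne_zero_of_rank
    rw [Matrix.rank_self_mul_transpose, hrank]
  have hPdet : P.det ≠ 0 := by
    intro h0
    have := key νᵀ
    rw [h0, zero_mul] at this
    exact mul_ne_zero hννdet hCdet this.symm
  refine ⟨P.det / (Cᵀ * C).det, div_ne_zero hPdet hCdet, fun R => ?_⟩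
  have := key R
  field_simp
  linarith [key R]
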